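/- Let a maximally entangled state |Φ⟩ on H_A ⊗ H_B (with dim H_B ≥ dim H_A) be given, where H_A = ⊕_{λ∈Ĝ'} H_λ ⊗ M_λ decomposes under a unitary representation of a finite group G into irreducibles H_λ with multiplicity spaces M_λ. Then |Φ⟩ can be written in the form |Φ⟩ = Σ_k √(P_K(k)) Σ_λ √(P_Λ(λ)) e^{iθ_{λ,k}} |ψ_{λ,k}⟩ ⊗ |e_k⟩ with Tr_{M_λ}|ψ_{λ,k}⟩⟨ψ_{λ,k}| independent of k (for each λ, equal to the maximally mixed state on H_λ) — if and only if dim M_λ ≥ dim H_λ for every λ ∈ Ĝ'. -/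

import Mathlib

open scoped Matrix Kronecker ComplexOrder
open Matrix

namespace DenseCoding

variable {n : Type*}

/-- Spectral functional calculus of a Hermitian matrix (0 on non-Hermitian input). -/
noncomputable def funCalc [Fintype n] [DecidableEq n] (f : ℝ → ℝ) (A : Matrix n n ℂ) :
    Matrix n n ℂ :=
  if hA : A.IsHermitian then
    (hA.eigenvectorUnitary : Matrix n n ℂ) *
      Matrix.diagonal (fun i => (f (hA.eigenvalues i) : ℂ)) *
      (star (hA.eigenvectorUnitary : Matrix n n ℂ))
  else 0

/-- Matrix logarithm (via the spectral decomposition). -/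
noncomputable def mLog [Fintype n] [DecidableEq n] (A : Matrix n n ℂ) : Matrix n n ℂ :=
  funCalc Real.log A

/-- Matrix square root (via the spectral decomposition). -/
noncomputable def mSqrt [Fintype n] [DecidableEq n] (A : Matrix n n ℂ) : Matrix n n ℂ :=
  funCalc Real.sqrt A

/-- Pseudo-inverse of the square root, taken on the support. -/
noncomputable def mPinvSqrt [Fintype n] [DecidableEq n] (A : Matrix n n ℂ) : Matrix n n ℂ :=
  funCalc (fun x => if x = 0 then 0 else 1 / Real.sqrt x) A

/-- von Neumann entropy H(A) = -Tr A log A, via eigenvalues. -/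
noncomputable def vnEntropy [Fintype n] [DecidableEq n] (A : Matrix n n ℂ) : ℝ :=
  if hA : A.IsHermitian then -∑ i, hA.eigenvalues i * Real.log (hA.eigenvalues i) else 0

/-- Quantum relative entropy D(ρ‖σ) = Tr ρ (log ρ - log σ). -/
noncomputable def relEntropy [Fintype n] [DecidableEq n] (ρ σ : Matrix n n ℂ) : ℝ :=
  ((ρ * (mLog ρ - mLog σ)).trace).re

/-- Density operator: positive semidefinite with unit trace. -/
def IsDensity [Fintype n] (ρ : Matrix n n ℂ) : Prop := ρ.PosSemidef ∧ ρ.trace = 1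

/-- Projective unitary representation: each U g is unitary and
    U g * U g' = c(g,g') • U (g g') for unit complex numbers c(g,g'). -/
def IsProjUnitaryRep {G : Type*} [Group G] [Fintype n] [DecidableEq n]
    (U : G → Matrix n n ℂ) : Prop :=
  (∀ g, U g ∈ Matrix.unitaryGroup n ℂ) ∧
    ∀ g g', ∃ c : ℂ, ‖c‖ = 1 ∧ U g * U g' = c • U (g * g')

/-- The group twirling channel 𝒢(ρ) = (1/|G|) Σ_g (U_g ⊗ I) ρ (U_g ⊗ I)†. -/
noncomputable def twirl {G a b : Type*} [Fintype G] [Fintype a] [Fintype b] [DecidableEq b]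
    (U : G → Matrix a a ℂ) (ρ : Matrix (a × b) (a × b) ℂ) : Matrix (a × b) (a × b) ℂ :=
  (Fintype.card G : ℂ)⁻¹ •
    ∑ g, (U g ⊗ₖ (1 : Matrix b b ℂ)) * ρ * (U g ⊗ₖ (1 : Matrix b b ℂ))ᴴ

/-- Rank-one outer product |x⟩⟨x|. -/
def outer {b : Type*} (x : b → ℂ) : Matrix b b ℂ := Matrix.vecMulVec x (star x)

/-- Measurement channel on B in the (orthonormal) family e:
    ℬ(ρ) = Σ_k (I ⊗ |e_k⟩⟨e_k|) ρ (I ⊗ |e_k⟩⟨e_k|). -/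
noncomputable def meas {a b ι : Type*} [Fintype a] [Fintype b] [Fintype ι] [DecidableEq a]
    (e : ι → b → ℂ) (ρ : Matrix (a × b) (a × b) ℂ) : Matrix (a × b) (a × b) ℂ :=
  ∑ k, ((1 : Matrix a a ℂ) ⊗ₖ outer (e k)) * ρ * ((1 : Matrix a a ℂ) ⊗ₖ outer (e k))

/-- A family of vectors is orthonormal. -/
def OrthoFam {ι b : Type*} [Fintype b] [DecidableEq ι] (e : ι → b → ℂ) : Prop :=
  ∀ k k', ∑ i, star (e k i) * e k' i = if k = k' then 1 else 0

/-- Completely positive trace-preserving map, via a Kraus representation. -/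
def IsCPTP {n m : Type*} [Fintype n] [Fintype m] [DecidableEq n] [DecidableEq m] (Γ : Matrix n n ℂ → Matrix m m ℂ) : Prop :=
  ∃ (N : ℕ) (K : Fin N → Matrix m n ℂ),
    (∀ ρ, Γ ρ = ∑ t, K t * ρ * (K t)ᴴ) ∧ (∑ t, (K t)ᴴ * K t = 1)

/-- Gram matrix J(V)_{λη} = ⟨v_λ|v_η⟩ of a family of vectors. -/
noncomputable def gram {l β : Type*} [Fintype β] (v : l → β → ℂ) : Matrix l l ℂ :=
  Matrix.of fun i j => ∑ k, v i k * star (v j k)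

/-- The maximally coherent state projector |+⟩⟨+| on C^l. -/
noncomputable def plusMat (l : ℕ) : Matrix (Fin l) (Fin l) ℂ := Matrix.of fun _ _ => (l : ℂ)⁻¹

/-- Incoherent (diagonal) unitary Z_k = Σ_λ e^{iθ_{λ,k}}|λ⟩⟨λ|. -/
noncomputable def diagPhase {l κ : Type*} [DecidableEq l] (θ : l → κ → ℝ) (k : κ) :
    Matrix l l ℂ :=
  Matrix.diagonal fun i => Complex.exp (Complex.I * θ i k)

/-- Shannon entropy of a distribution. -/
noncomputable def shannonEntropy {ι : Type*} [Fintype ι] (P : ι → ℝ) : ℝ :=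
  -∑ i, P i * Real.log (P i)


/-- The phase e^{2πi x / l}. -/
noncomputable def phase (l : ℕ) (x : ℤ) : ℂ :=
  Complex.exp (((2 * Real.pi * x / l : ℝ) : ℂ) * Complex.I)


lemma phase_mul (l : ℕ) (x y : ℤ) : phase l x * phase l y = phase l (x + y) := by
  rw [phase, phase, phase, ← Complex.exp_add]
  congr 1
  push_cast
  ring

lemma star_phase (l : ℕ) (x : ℤ) : star (phase l x) = phase l (-x) := by
  rw [phase, phase, Complex.star_def, ← Complex.exp_conj]
  congr 1
  simp only [_root_.map_mul, Complex.conj_ofReal, Complex.conj_I]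
  push_cast
  ring

lemma phase_zero (l : ℕ) : phase l 0 = 1 := by
  simp [phase]

lemma phase_mul_star_self (l : ℕ) (x : ℤ) : phase l x * star (phase l x) = 1 := by
  rw [star_phase, phase_mul]
  simp [phase_zero]

lemma phase_pow (l : ℕ) (x : ℤ) (m : ℕ) : phase l x ^ m = phase l (x * m) := by
  rw [phase, phase, ← Complex.exp_nat_mul]
  congr 1
  push_cast
  ring

lemma phase_eq_one_of_dvd {l : ℕ} {x : ℤ} (h : (l : ℤ) ∣ x) : phase l x = 1 := by
  rcases Nat.eq_zero_or_pos l with hl | hl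
  · subst hl; simp [phase]
  obtain ⟨s, rfl⟩ := h
  have hl' : (l : ℝ) ≠ 0 := Nat.cast_ne_zero.mpr hl.ne'
  rw [phase, Complex.exp_eq_one_iff]
  refine ⟨s, ?_⟩
  have hreal : (2 * Real.pi * (((l : ℤ) * s : ℤ) : ℝ) / l : ℝ) = (s : ℝ) * (2 * Real.pi) := by
    push_cast
    field_simp
  rw [hreal]
  push_cast
  ring

lemma phase_ne_one {l : ℕ} (hl : 0 < l) {x : ℤ} (h : ¬ (l : ℤ) ∣ x) : phase l x ≠ 1 := by
  intro hx
  rw [phase, Complex.exp_eq_one_iff] at hx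
  obtain ⟨m, hm⟩ := hx
  have hl' : (l : ℝ) ≠ 0 := Nat.cast_ne_zero.mpr hl.ne'
  have hpi : (2 * Real.pi) ≠ 0 := by positivity
  have hre : (2 * Real.pi * (x : ℝ) / l : ℝ) = (m : ℝ) * (2 * Real.pi) := by
    have him := congrArg Complex.im hm
    simpa using him
  rw [div_eq_iff hl'] at hre
  have hx' : (x : ℝ) = (l : ℝ) * m := by
    apply mul_left_cancel₀ hpi
    linarith [hre]
  exact h ⟨m, by exact_mod_cast hx'⟩

lemma sum_phase (l : ℕ) (hl : 0 < l) (r : ℤ) :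
    ∑ m : Fin l, phase l (r * (m : ℕ)) = if (l : ℤ) ∣ r then (l : ℂ) else 0 := by
  rw [Fin.sum_univ_eq_sum_range (fun m => phase l (r * (m : ℕ))) l]
  by_cases h : (l : ℤ) ∣ r
  · rw [if_pos h]
    rw [Finset.sum_congr rfl (fun m _ => phase_eq_one_of_dvd (h.mul_right _))]
    simp
  · rw [if_neg h]
    have hne : phase l r ≠ 1 := phase_ne_one hl h
    have hpw : ∀ m ∈ Finset.range l, phase l (r * (m : ℕ)) = (phase l r) ^ m := by
      intro m _
      rw [phase_pow]
    rw [Finset.sum_congr rfl hpw, geom_sum_eq hne]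
    rw [phase_pow, phase_eq_one_of_dvd (Dvd.intro_left r rfl)]
    simp

section MixedRadix

set_option linter.unusedSectionVars false
variable {Λ : Type*} [Fintype Λ] [DecidableEq Λ] (dH dM : Λ → ℕ)
  (ord : Λ → ℕ) 

/-- Offset of block `c` in the mixed-radix enumeration. -/
noncomputable def off (c : Λ) : ℕ :=
  ∑ c' ∈ Finset.univ.filter (fun c' => ord c' < ord c), dH c' * dM c'

/-- Mixed radix position of a point of the sigma type. -/
noncomputable def chi (a : Σ c : Λ, Fin (dH c) × Fin (dM c)) : ℕ :=
  off dH dM ord a.1 + ((a.2.1 : ℕ) * dM a.1 + (a.2.2 : ℕ))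

lemma block_lt (c : Λ) (i : Fin (dH c)) (j : Fin (dM c)) :
    (i : ℕ) * dM c + (j : ℕ) < dH c * dM c := by
  have h1 : (i : ℕ) * dM c + (j : ℕ) < ((i : ℕ) + 1) * dM c := by
    have := j.isLt
    nlinarith
  have h2 : ((i : ℕ) + 1) * dM c ≤ dH c * dM c :=
    Nat.mul_le_mul_right _ i.isLt
  omega

lemma off_add_le (c : Λ) :
    off dH dM ord c + dH c * dM c ≤ ∑ c', dH c' * dM c' := by
  have hc : c ∉ Finset.univ.filter (fun c' => ord c' < ord c) := by
    simp
  calc off dH dM ord c + dH c * dM c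
      = ∑ c' ∈ insert c (Finset.univ.filter (fun c' => ord c' < ord c)), dH c' * dM c' := by
        rw [Finset.sum_insert hc, off]; ring
    _ ≤ ∑ c', dH c' * dM c' :=
        Finset.sum_le_sum_of_subset (Finset.subset_univ _)

lemma off_mono {c c' : Λ} (h : ord c < ord c') :
    off dH dM ord c + dH c * dM c ≤ off dH dM ord c' := by
  have hc : c ∉ Finset.univ.filter (fun x => ord x < ord c) := by simp
  have hsub : insert c (Finset.univ.filter (fun x => ord x < ord c)) ⊆
      Finset.univ.filter (fun x => ord x < ord c') := by
    intro x hx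
    rcases Finset.mem_insert.mp hx with rfl | hx
    · simp [h]
    · simp only [Finset.mem_filter, Finset.mem_univ, true_and] at hx ⊢
      omega
  calc off dH dM ord c + dH c * dM c
      = ∑ x ∈ insert c (Finset.univ.filter (fun x => ord x < ord c)), dH x * dM x := by
        rw [Finset.sum_insert hc, off]; ring
    _ ≤ off dH dM ord c' := Finset.sum_le_sum_of_subset hsub

lemma chi_lt (a : Σ c : Λ, Fin (dH c) × Fin (dM c)) :
    chi dH dM ord a < ∑ c', dH c' * dM c' := by
  obtain ⟨c, i, j⟩ := a
  have h1 := block_lt dH dM c i j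
  have h2 := off_add_le dH dM ord c
  simp only [chi]
  omega

lemma chi_inj (hord : Function.Injective ord) :
    Function.Injective (chi dH dM ord) := by
  intro a a' h
  obtain ⟨c, i, j⟩ := a
  obtain ⟨c', i', j'⟩ := a'
  rcases eq_or_ne c c' with rfl | hne
  · -- same block
    simp only [chi] at h
    have h2 : (i : ℕ) * dM c + (j : ℕ) = (i' : ℕ) * dM c + (j' : ℕ) := by omega
    have hii : (i : ℕ) = (i' : ℕ) := by
      by_contra hii
      rcases Nat.lt_or_ge (i : ℕ) (i' : ℕ) with hlt | hge
      · have : (i : ℕ) * dM c + (j : ℕ) < (i' : ℕ) * dM c + (j' : ℕ) := by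
          have hj := j.isLt
          have : ((i : ℕ) + 1) * dM c ≤ (i' : ℕ) * dM c := Nat.mul_le_mul_right _ hlt
          nlinarith
        omega
      · have hlt' : (i' : ℕ) < (i : ℕ) := by omega
        have : (i' : ℕ) * dM c + (j' : ℕ) < (i : ℕ) * dM c + (j : ℕ) := by
          have hj := j'.isLt
          have : ((i' : ℕ) + 1) * dM c ≤ (i : ℕ) * dM c := Nat.mul_le_mul_right _ hlt'
          nlinarith
        omega
    have hmm : (i : ℕ) * dM c = (i' : ℕ) * dM c := by rw [hii]
    have hjj : (j : ℕ) = (j' : ℕ) := by omega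
    congr 1
    ext
    · exact hii
    · exact hjj
  · -- different blocks: contradiction
    exfalso
    have hordne : ord c ≠ ord c' := fun hh => hne (hord hh)
    have hb := block_lt dH dM c i j
    have hb' := block_lt dH dM c' i' j'
    simp only [chi] at h
    rcases Nat.lt_or_ge (ord c) (ord c') with hlt | hge
    · have := off_mono dH dM ord hlt
      omega
    · have hlt' : ord c' < ord c := by omega
      have := off_mono dH dM ord hlt'
      omega

end MixedRadix

lemma phase_mul_star_phase (l : ℕ) (x y : ℤ) :
    phase l x * star (phase l y) = phase l (x - y) := by
  rw [star_phase, phase_mul, sub_eq_add_neg]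

lemma int_dvd_sub_iff {l x y : ℕ} (hx : x < l) (hy : y < l) :
    ((l : ℤ) ∣ (x : ℤ) - (y : ℤ)) ↔ x = y := by
  constructor
  · intro h
    have h2 : (x : ℤ) - (y : ℤ) = 0 := by
      refine Int.eq_zero_of_abs_lt_dvd h ?_
      rw [abs_sub_lt_iff]
      constructor <;> omega
    omega
  · rintro rfl
    simp

section Construction

set_option linter.unusedSectionVars false

variable {Λ : Type*} [Fintype Λ] [DecidableEq Λ] (dH dM : Λ → ℕ) (ord : Λ → ℕ) (d : ℕ)

/-- The entries of the big unitary: chirp times Fourier phase. -/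
noncomputable def Vv (t : ℕ) (a : Σ c : Λ, Fin (dH c) × Fin (dM c)) : ℂ :=
  phase (dM a.1) (((a.2.1 : ℕ) * (a.2.2 : ℕ) : ℕ)) *
    phase d ((t * chi dH dM ord a : ℕ))

lemma Vv_mul_star (t t' : ℕ) (a : Σ c : Λ, Fin (dH c) × Fin (dM c)) :
    Vv dH dM ord d t a * star (Vv dH dM ord d t' a)
      = phase d (((t : ℤ) - (t' : ℤ)) * (chi dH dM ord a : ℕ)) := by
  rw [Vv, Vv, star_mul', mul_mul_mul_comm, phase_mul_star_self, one_mul,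
    phase_mul_star_phase]
  congr 1
  push_cast
  ring

lemma gram_Vv (hdpos : 0 < d)
    (hsum : ∀ F : ℕ → ℂ,
      ∑ a : (Σ c : Λ, Fin (dH c) × Fin (dM c)), F (chi dH dM ord a) = ∑ m : Fin d, F (m : ℕ))
    (hlt : ∀ a : (Σ c : Λ, Fin (dH c) × Fin (dM c)), chi dH dM ord a < d)
    (t t' : Fin d) :
    ∑ a : (Σ c : Λ, Fin (dH c) × Fin (dM c)),
        Vv dH dM ord d (t : ℕ) a * star (Vv dH dM ord d (t' : ℕ) a)
      = if t = t' then (d : ℂ) else 0 := by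
  have h1 : ∀ a : (Σ c : Λ, Fin (dH c) × Fin (dM c)),
      Vv dH dM ord d (t : ℕ) a * star (Vv dH dM ord d (t' : ℕ) a)
        = (fun x : ℕ => phase d ((((t : ℕ) : ℤ) - ((t' : ℕ) : ℤ)) * (x : ℕ))) (chi dH dM ord a) :=
    fun a => Vv_mul_star dH dM ord d _ _ a
  rw [Finset.sum_congr rfl (fun a _ => h1 a),
    hsum (fun x : ℕ => phase d ((((t : ℕ) : ℤ) - ((t' : ℕ) : ℤ)) * (x : ℕ))), sum_phase d hdpos]
  have : (((d : ℕ) : ℤ) ∣ ((t : ℕ) : ℤ) - ((t' : ℕ) : ℤ)) ↔ t = t' := by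
    rw [int_dvd_sub_iff t.isLt t'.isLt]
    exact ⟨fun h => Fin.ext h, fun h => congrArg Fin.val h⟩
  simp [this]

lemma compl_Vv (hdpos : 0 < d)
    (hlt : ∀ a : (Σ c : Λ, Fin (dH c) × Fin (dM c)), chi dH dM ord a < d)
    (hinj : Function.Injective (chi dH dM ord))
    (a a' : Σ c : Λ, Fin (dH c) × Fin (dM c)) :
    ∑ t : Fin d, Vv dH dM ord d (t : ℕ) a * star (Vv dH dM ord d (t : ℕ) a')
      = if a = a' then (d : ℂ) else 0 := by
  have h1 : ∀ t : Fin d,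
      Vv dH dM ord d (t : ℕ) a * star (Vv dH dM ord d (t : ℕ) a')
        = (phase (dM a.1) (((a.2.1 : ℕ) * (a.2.2 : ℕ) : ℕ)) *
            star (phase (dM a'.1) (((a'.2.1 : ℕ) * (a'.2.2 : ℕ) : ℕ)))) *
          phase d (((chi dH dM ord a : ℤ) - (chi dH dM ord a' : ℤ)) * ((t : ℕ) : ℕ)) := by
    intro t
    rw [Vv, Vv, star_mul', mul_mul_mul_comm, phase_mul_star_phase]
    congr 1
    push_cast
    ring
  rw [Finset.sum_congr rfl (fun t _ => h1 t), ← Finset.mul_sum, sum_phase d hdpos]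
  have hiff : (((d : ℕ) : ℤ) ∣ (chi dH dM ord a : ℤ) - (chi dH dM ord a' : ℤ)) ↔ a = a' := by
    rw [int_dvd_sub_iff (hlt a) (hlt a')]
    exact ⟨fun h => hinj h, fun h => congrArg _ h⟩
  rcases eq_or_ne a a' with rfl | hne
  · rw [if_pos rfl, if_pos (hiff.mpr rfl), phase_mul_star_self]
    ring
  · rw [if_neg hne, if_neg (fun h => hne (hiff.mp h))]
    ring

lemma block_Vv {c : Λ} (hcle : dH c ≤ dM c) (hdMpos : 0 < dM c) (t : ℕ) (i i' : Fin (dH c)) :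
    ∑ j : Fin (dM c), Vv dH dM ord d t ⟨c, (i, j)⟩ * star (Vv dH dM ord d t ⟨c, (i', j)⟩)
      = if i = i' then (dM c : ℂ) else 0 := by
  have hchi : ∀ j : Fin (dM c),
      (chi dH dM ord ⟨c, (i, j)⟩ : ℤ) - (chi dH dM ord ⟨c, (i', j)⟩ : ℤ)
        = (((i : ℕ) : ℤ) - ((i' : ℕ) : ℤ)) * (dM c : ℤ) := by
    intro j
    simp only [chi]
    push_cast
    ring
  have h1 : ∀ j : Fin (dM c),
      Vv dH dM ord d t ⟨c, (i, j)⟩ * star (Vv dH dM ord d t ⟨c, (i', j)⟩)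
        = phase (dM c) ((((i : ℕ) : ℤ) - ((i' : ℕ) : ℤ)) * ((j : ℕ) : ℤ)) *
          phase d ((t : ℤ) * ((((i : ℕ) : ℤ) - ((i' : ℕ) : ℤ)) * (dM c : ℤ))) := by
    intro j
    rw [Vv, Vv, star_mul', mul_mul_mul_comm, phase_mul_star_phase, phase_mul_star_phase]
    congr 1
    · congr 1
      push_cast
      ring
    · rw [← hchi j]
      congr 1
      push_cast
      ring
  rw [Finset.sum_congr rfl (fun j _ => h1 j), ← Finset.sum_mul, sum_phase (dM c) hdMpos]
  have hiff : (((dM c : ℕ) : ℤ) ∣ ((i : ℕ) : ℤ) - ((i' : ℕ) : ℤ)) ↔ i = i' := by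
    rw [int_dvd_sub_iff (lt_of_lt_of_le i.isLt hcle) (lt_of_lt_of_le i'.isLt hcle)]
    exact ⟨fun h => Fin.ext h, fun h => congrArg Fin.val h⟩
  rcases eq_or_ne i i' with rfl | hne
  · rw [if_pos rfl, if_pos (hiff.mpr rfl)]
    have h0 : phase d ((t : ℤ) * ((((i : ℕ) : ℤ) - ((i : ℕ) : ℤ)) * (dM c : ℤ))) = 1 := by
      rw [show ((t : ℤ) * ((((i : ℕ) : ℤ) - ((i : ℕ) : ℤ)) * (dM c : ℤ))) = 0 by ring, phase_zero]
    rw [h0, mul_one]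
  · rw [if_neg hne, if_neg (fun h => hne (hiff.mp h)), zero_mul]

end Construction

/-- a maximally entangled state on H_A ⊗ H_B, where
H_A = ⊕_c H_c ⊗ M_c (irreps H_c = ℂ^{dH c} with multiplicity spaces M_c = ℂ^{dM c}),
admits the form |Φ⟩ = Σ_k √P_K(k) Σ_c √P_Λ(c) e^{iθ_{c,k}} |ψ_{c,k}⟩ ⊗ |e_k⟩, with
Tr_{M_c}|ψ_{c,k}⟩⟨ψ_{c,k}| independent of k and equal to the maximally mixed state
on H_c, if and only if dim M_c ≥ dim H_c for every c. -/
theorem maxEnt_C1_iff_multiplicity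
    {Λ β : Type*} [Fintype Λ] [DecidableEq Λ] [Fintype β] [DecidableEq β]
    (dH dM : Λ → ℕ) (hdH : ∀ c, 0 < dH c) (hdM : ∀ c, 0 < dM c)
    (hdim : Fintype.card (Σ c : Λ, Fin (dH c) × Fin (dM c)) ≤ Fintype.card β)
    (Φ : (Σ c : Λ, Fin (dH c) × Fin (dM c)) × β → ℂ)
    (hnorm : ∑ q, Φ q * star (Φ q) = 1)
    (hmax : ∀ a a' : Σ c : Λ, Fin (dH c) × Fin (dM c),
      ∑ b, Φ (a, b) * star (Φ (a', b)) =
        if a = a' then ((Fintype.card (Σ c : Λ, Fin (dH c) × Fin (dM c)) : ℂ))⁻¹ else 0) :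
    (∃ (e : β → β → ℂ) (PK : β → ℝ) (PL : Λ → ℝ) (θ : Λ → β → ℝ)
        (ψ : (c : Λ) → β → (Fin (dH c) × Fin (dM c)) → ℂ),
      OrthoFam e ∧
      (∀ k, 0 ≤ PK k) ∧ (∑ k, PK k = 1) ∧
      (∀ c, 0 ≤ PL c) ∧ (∑ c, PL c = 1) ∧
      (∀ c k, ∑ x, ψ c k x * star (ψ c k x) = 1) ∧
      (∀ c k, ∀ i i' : Fin (dH c),
        ∑ j, ψ c k (i, j) * star (ψ c k (i', j)) = if i = i' then ((dH c : ℂ))⁻¹ else 0) ∧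
      (∀ (a : Σ c : Λ, Fin (dH c) × Fin (dM c)) (b : β),
        Φ (a, b) = ∑ k, (↑(Real.sqrt (PK k)) : ℂ) * (↑(Real.sqrt (PL a.1)) : ℂ) *
          Complex.exp (Complex.I * θ a.1 k) * ψ a.1 k a.2 * e k b))
    ↔ (∀ c : Λ, dH c ≤ dM c) := by
  classical
  constructor
  · rintro ⟨e, PK, PL, θ, ψ, he, hPK0, hPK1, hPL0, hPL1, hunit, hmix, hrep⟩ c
    have hA : Nonempty (Σ c' : Λ, Fin (dH c') × Fin (dM c')) :=
      ⟨⟨c, ⟨0, hdH c⟩, ⟨0, hdM c⟩⟩⟩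
    have hβpos : 0 < Fintype.card β :=
      lt_of_lt_of_le (Fintype.card_pos_iff.mpr hA) hdim
    obtain ⟨k⟩ : Nonempty β := Fintype.card_pos_iff.mp hβpos
    set M : Matrix (Fin (dH c)) (Fin (dM c)) ℂ := Matrix.of (fun i j => ψ c k (i, j)) with hMdef
    have hMM : M * Mᴴ = ((dH c : ℂ))⁻¹ • (1 : Matrix (Fin (dH c)) (Fin (dH c)) ℂ) := by
      ext i i'
      rw [Matrix.mul_apply]
      simp only [Matrix.conjTranspose_apply, hMdef, Matrix.of_apply, Matrix.smul_apply,
        Matrix.one_apply, smul_eq_mul]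
      rw [hmix c k i i']
      split_ifs <;> simp
    have hdHne : ((dH c : ℂ))⁻¹ ≠ 0 :=
      inv_ne_zero (Nat.cast_ne_zero.mpr (hdH c).ne')
    have hu : IsUnit (M * Mᴴ) := by
      rw [hMM, Matrix.isUnit_iff_isUnit_det, Matrix.det_smul, Matrix.det_one, mul_one]
      exact IsUnit.pow _ hdHne.isUnit
    calc dH c = (M * Mᴴ).rank := by rw [Matrix.rank_of_isUnit _ hu, Fintype.card_fin]
      _ ≤ M.rank := Matrix.rank_mul_le_left M Mᴴ
      _ ≤ Fintype.card (Fin (dM c)) := Matrix.rank_le_card_width M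
      _ = dM c := Fintype.card_fin _
  · intro hle
    rcases isEmpty_or_nonempty Λ with hΛ | hΛ
    · exfalso
      have h0 : ∑ q : (Σ c : Λ, Fin (dH c) × Fin (dM c)) × β, Φ q * star (Φ q) = 0 := by
        have hie : IsEmpty ((Σ c : Λ, Fin (dH c) × Fin (dM c)) × β) := by infer_instance
        simp [Finset.univ_eq_empty]
      rw [hnorm] at h0
      exact one_ne_zero h0
    -- basic quantities
    set d := Fintype.card (Σ c : Λ, Fin (dH c) × Fin (dM c)) with hd
    have hdsum : d = ∑ c : Λ, dH c * dM c := by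
      rw [hd, Fintype.card_sigma]
      simp
    have hdpos : 0 < d := by
      rw [hd]
      exact Fintype.card_pos_iff.mpr ⟨⟨hΛ.some, ⟨0, hdH _⟩, ⟨0, hdM _⟩⟩⟩
    have hdR : (d : ℝ) ≠ 0 := Nat.cast_ne_zero.mpr hdpos.ne'
    have hdC : (d : ℂ) ≠ 0 := Nat.cast_ne_zero.mpr hdpos.ne'
    clear_value d
    set ord : Λ → ℕ := fun c => ((Fintype.equivFin Λ) c : ℕ) with hord_def
    have hord : Function.Injective ord := fun x y h =>
      (Fintype.equivFin Λ).injective (Fin.val_injective h)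
    have hlt : ∀ a : (Σ c : Λ, Fin (dH c) × Fin (dM c)), chi dH dM ord a < d := by
      intro a
      rw [hdsum]
      exact chi_lt dH dM ord a
    have hinj : Function.Injective (chi dH dM ord) := chi_inj dH dM ord hord
    set chiF : (Σ c : Λ, Fin (dH c) × Fin (dM c)) → Fin d := fun a => ⟨chi dH dM ord a, hlt a⟩
      with hchiF
    have hbij : Function.Bijective chiF := by
      rw [Fintype.bijective_iff_injective_and_card]
      refine ⟨fun a a' h => hinj (congrArg Fin.val h), by rw [Fintype.card_fin]; exact hd.symm⟩
    have hsum : ∀ F : ℕ → ℂ,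
        ∑ a : (Σ c : Λ, Fin (dH c) × Fin (dM c)), F (chi dH dM ord a) = ∑ m : Fin d, F (m : ℕ) :=
      fun F => Fintype.sum_bijective chiF hbij _ _ (fun a => rfl)
    obtain ⟨em⟩ : Nonempty (Fin d ↪ β) := by
      apply Function.Embedding.nonempty_of_card_le
      rw [Fintype.card_fin]
      exact hdim
    set inv : β → Fin d := fun k => if h : ∃ t : Fin d, em t = k then h.choose else ⟨0, hdpos⟩
      with hinv_def
    have hinv : ∀ t : Fin d, inv (em t) = t := by
      intro t
      have hex : ∃ t' : Fin d, em t' = em t := ⟨t, rfl⟩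
      rw [hinv_def]
      simp only [dif_pos hex]
      exact em.injective hex.choose_spec
    -- the B-side vectors
    set w : Fin d → β → ℂ := fun t b => ∑ a, star (Vv dH dM ord d (t : ℕ) a) * Φ (a, b) with hw
    have hBB : ∀ a a' : (Σ c : Λ, Fin (dH c) × Fin (dM c)),
        ∑ b, star (Φ (a, b)) * Φ (a', b) = if a = a' then (d : ℂ)⁻¹ else 0 := by
      intro a a'
      have hmx := hmax a' a
      calc ∑ b, star (Φ (a, b)) * Φ (a', b) = ∑ b, Φ (a', b) * star (Φ (a, b)) := by
            refine Finset.sum_congr rfl fun b _ => by ring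
        _ = if a' = a then (d : ℂ)⁻¹ else 0 := hmx
        _ = if a = a' then (d : ℂ)⁻¹ else 0 := by simp [eq_comm]
    have horthw : ∀ t t' : Fin d, ∑ b, star (w t b) * w t' b = if t = t' then 1 else 0 := by
      intro t t'
      have hexp : ∀ b : β, star (w t b) * w t' b
          = ∑ a, ∑ a', (Vv dH dM ord d (t : ℕ) a * star (Vv dH dM ord d (t' : ℕ) a')) *
              (star (Φ (a, b)) * Φ (a', b)) := by
        intro b
        simp only [hw]
        rw [star_sum, Finset.sum_mul_sum]
        refine Finset.sum_congr rfl fun a _ => Finset.sum_congr rfl fun a' _ => by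
          rw [star_mul', star_star]
          ring
      calc ∑ b, star (w t b) * w t' b
          = ∑ b, ∑ a, ∑ a', (Vv dH dM ord d (t : ℕ) a * star (Vv dH dM ord d (t' : ℕ) a')) *
              (star (Φ (a, b)) * Φ (a', b)) := Finset.sum_congr rfl fun b _ => hexp b
        _ = ∑ a, ∑ a', (Vv dH dM ord d (t : ℕ) a * star (Vv dH dM ord d (t' : ℕ) a')) *
              ∑ b, star (Φ (a, b)) * Φ (a', b) := by
            rw [Finset.sum_comm]
            refine Finset.sum_congr rfl fun a _ => ?_
            rw [Finset.sum_comm]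
            refine Finset.sum_congr rfl fun a' _ => ?_
            rw [Finset.mul_sum]
        _ = ∑ a, (Vv dH dM ord d (t : ℕ) a * star (Vv dH dM ord d (t' : ℕ) a)) * (d : ℂ)⁻¹ := by
            refine Finset.sum_congr rfl fun a _ => ?_
            rw [Finset.sum_congr rfl fun a' (_ : a' ∈ Finset.univ) => by rw [hBB a a']]
            rw [Finset.sum_eq_single a]
            · rw [if_pos rfl]
            · intro a' _ hne
              rw [if_neg (fun h => hne h.symm), mul_zero]
            · intro habs
              exact absurd (Finset.mem_univ a) habs
        _ = (∑ a, Vv dH dM ord d (t : ℕ) a * star (Vv dH dM ord d (t' : ℕ) a)) * (d : ℂ)⁻¹ := by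
            rw [Finset.sum_mul]
        _ = (if t = t' then (d : ℂ) else 0) * (d : ℂ)⁻¹ := by
            rw [gram_Vv dH dM ord d hdpos hsum hlt t t']
        _ = if t = t' then 1 else 0 := by
            split_ifs
            · exact mul_inv_cancel₀ hdC
            · exact zero_mul _
    -- extend to an orthonormal basis
    have hfr : Module.finrank ℂ (EuclideanSpace ℂ β) = Fintype.card β := finrank_euclideanSpace
    have hON : Orthonormal ℂ ((Set.range (⇑em)).restrict
        (fun k : β => (WithLp.equiv 2 (β → ℂ)).symm (w (inv k)))) := by
      rw [orthonormal_iff_ite]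
      rintro ⟨k, t, rfl⟩ ⟨k', t', rfl⟩
      have hin : (inner ℂ ((Set.range (⇑em)).restrict
            (fun k : β => (WithLp.equiv 2 (β → ℂ)).symm (w (inv k))) ⟨em t, ⟨t, rfl⟩⟩)
          ((Set.range (⇑em)).restrict
            (fun k : β => (WithLp.equiv 2 (β → ℂ)).symm (w (inv k))) ⟨em t', ⟨t', rfl⟩⟩) : ℂ)
          = ∑ b, star (w t b) * w t' b := by
        simp only [Set.restrict_apply, PiLp.inner_apply, RCLike.inner_apply, starRingEnd_apply,
          hinv, WithLp.equiv_symm_apply, WithLp.ofLp_toLp, mul_comm]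
        change ∑ x, star ((w (inv (em t))) x) * (w (inv (em t'))) x = _
        rw [hinv, hinv]
      rw [hin, horthw t t']
      have hiff : ((⟨em t, ⟨t, rfl⟩⟩ : Set.range (⇑em)) = ⟨em t', ⟨t', rfl⟩⟩) ↔ t = t' := by
        rw [← Subtype.val_inj]
        exact ⟨fun h => em.injective h, fun h => congrArg em h⟩
      split_ifs with h1 h2 h2
      · rfl
      · exact absurd (hiff.mpr h1) h2
      · exact absurd (hiff.mp h2) h1
      · rfl
    obtain ⟨bas, hbas⟩ := hON.exists_orthonormalBasis_extension_of_card_eq hfr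
    have hbase : ∀ t : Fin d, ∀ b : β, bas (em t) b = w t b := by
      intro t b
      have h1 : bas (em t) = (WithLp.equiv 2 (β → ℂ)).symm (w (inv (em t))) :=
        hbas (em t) ⟨t, rfl⟩
      rw [h1, hinv]
      rfl
    -- provide the data
    refine ⟨fun k b => bas k b,
        (fun k => if ∃ t : Fin d, em t = k then (d : ℝ)⁻¹ else 0),
        (fun c => ((dH c : ℝ) * (dM c : ℝ)) / d),
        (fun _ _ => 0),
        (fun c k x => ((Real.sqrt ((dH c : ℝ) * (dM c : ℝ)) : ℂ))⁻¹ *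
          Vv dH dM ord d ((inv k : Fin d) : ℕ) ⟨c, x⟩),
        ?_, ?_, ?_, ?_, ?_, ?_, ?_, ?_⟩
    · -- OrthoFam
      intro k k'
      have hthis := orthonormal_iff_ite.mp bas.orthonormal k k'
      rw [PiLp.inner_apply] at hthis
      show ∑ i, star (bas k i) * bas k' i = if k = k' then 1 else 0
      rw [← hthis]
      exact Finset.sum_congr rfl fun i _ => by rw [RCLike.inner_apply, starRingEnd_apply, mul_comm]
    · -- PK nonneg
      intro k
      dsimp only
      split_ifs
      · positivity
      · exact le_refl 0
    · -- sum PK = 1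
      show ∑ k : β, (if ∃ t : Fin d, em t = k then (d : ℝ)⁻¹ else 0) = 1
      have h1 : ∀ k : β, (if ∃ t : Fin d, em t = k then (d : ℝ)⁻¹ else 0)
          = if k ∈ Finset.image (⇑em) Finset.univ then (d : ℝ)⁻¹ else 0 := by
        intro k
        congr 1
        simp [Finset.mem_image, eq_iff_iff]
      rw [Finset.sum_congr rfl fun k _ => h1 k, Finset.sum_ite_mem, Finset.univ_inter,
        Finset.sum_const, Finset.card_image_of_injective _ em.injective, Finset.card_univ,
        Fintype.card_fin, nsmul_eq_mul]
      exact mul_inv_cancel₀ hdR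
    · -- PL nonneg
      intro c
      positivity
    · -- sum PL = 1
      show ∑ c : Λ, ((dH c : ℝ) * (dM c : ℝ)) / d = 1
      rw [← Finset.sum_div]
      have hsd : ∑ c : Λ, (dH c : ℝ) * (dM c : ℝ) = (d : ℝ) := by
        rw [hdsum]
        push_cast
        ring
      rw [hsd, div_self hdR]
    · -- ψ normalized
      intro c k
      show ∑ x : Fin (dH c) × Fin (dM c),
          (((Real.sqrt ((dH c : ℝ) * (dM c : ℝ)) : ℂ))⁻¹ *
            Vv dH dM ord d ((inv k : Fin d) : ℕ) ⟨c, x⟩) *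
          star (((Real.sqrt ((dH c : ℝ) * (dM c : ℝ)) : ℂ))⁻¹ *
            Vv dH dM ord d ((inv k : Fin d) : ℕ) ⟨c, x⟩) = 1
      have hss : ((Real.sqrt ((dH c : ℝ) * (dM c : ℝ)) : ℂ))⁻¹ *
          star ((Real.sqrt ((dH c : ℝ) * (dM c : ℝ)) : ℂ))⁻¹
          = ((((dH c : ℝ) * (dM c : ℝ)) : ℝ) : ℂ)⁻¹ := by
        rw [Complex.star_def, ← Complex.ofReal_inv, Complex.conj_ofReal, ← Complex.ofReal_inv,
          ← Complex.ofReal_mul, ← mul_inv, Real.mul_self_sqrt (by positivity)]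
      rw [Fintype.sum_prod_type]
      have hrow : ∀ i : Fin (dH c),
          ∑ j : Fin (dM c), (((Real.sqrt ((dH c : ℝ) * (dM c : ℝ)) : ℂ))⁻¹ *
              Vv dH dM ord d ((inv k : Fin d) : ℕ) ⟨c, (i, j)⟩) *
            star (((Real.sqrt ((dH c : ℝ) * (dM c : ℝ)) : ℂ))⁻¹ *
              Vv dH dM ord d ((inv k : Fin d) : ℕ) ⟨c, (i, j)⟩)
          = ((((dH c : ℝ) * (dM c : ℝ)) : ℝ) : ℂ)⁻¹ * (dM c : ℂ) := by
        intro i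
        have hre : ∀ j : Fin (dM c), (((Real.sqrt ((dH c : ℝ) * (dM c : ℝ)) : ℂ))⁻¹ *
              Vv dH dM ord d ((inv k : Fin d) : ℕ) ⟨c, (i, j)⟩) *
            star (((Real.sqrt ((dH c : ℝ) * (dM c : ℝ)) : ℂ))⁻¹ *
              Vv dH dM ord d ((inv k : Fin d) : ℕ) ⟨c, (i, j)⟩)
            = ((((dH c : ℝ) * (dM c : ℝ)) : ℝ) : ℂ)⁻¹ *
              (Vv dH dM ord d ((inv k : Fin d) : ℕ) ⟨c, (i, j)⟩ *
                star (Vv dH dM ord d ((inv k : Fin d) : ℕ) ⟨c, (i, j)⟩)) := by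
          intro j
          rw [star_mul', ← hss]
          ring
        rw [Finset.sum_congr rfl fun j _ => hre j, ← Finset.mul_sum,
          block_Vv dH dM ord d (hle c) (hdM c) _ i i, if_pos rfl]
      rw [Finset.sum_congr rfl fun i _ => hrow i, Finset.sum_const, Finset.card_univ,
        Fintype.card_fin, nsmul_eq_mul]
      push_cast
      have h1 : ((dH c : ℂ)) ≠ 0 := Nat.cast_ne_zero.mpr (hdH c).ne'
      have h2 : ((dM c : ℂ)) ≠ 0 := Nat.cast_ne_zero.mpr (hdM c).ne'
      field_simp
    · -- ψ maximally mixed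
      intro c k i i'
      show ∑ j : Fin (dM c),
          (((Real.sqrt ((dH c : ℝ) * (dM c : ℝ)) : ℂ))⁻¹ *
            Vv dH dM ord d ((inv k : Fin d) : ℕ) ⟨c, (i, j)⟩) *
          star (((Real.sqrt ((dH c : ℝ) * (dM c : ℝ)) : ℂ))⁻¹ *
            Vv dH dM ord d ((inv k : Fin d) : ℕ) ⟨c, (i', j)⟩)
          = if i = i' then ((dH c : ℂ))⁻¹ else 0
      have hss : ((Real.sqrt ((dH c : ℝ) * (dM c : ℝ)) : ℂ))⁻¹ *
          star ((Real.sqrt ((dH c : ℝ) * (dM c : ℝ)) : ℂ))⁻¹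
          = ((((dH c : ℝ) * (dM c : ℝ)) : ℝ) : ℂ)⁻¹ := by
        rw [Complex.star_def, ← Complex.ofReal_inv, Complex.conj_ofReal, ← Complex.ofReal_inv,
          ← Complex.ofReal_mul, ← mul_inv, Real.mul_self_sqrt (by positivity)]
      have hre : ∀ j : Fin (dM c), (((Real.sqrt ((dH c : ℝ) * (dM c : ℝ)) : ℂ))⁻¹ *
            Vv dH dM ord d ((inv k : Fin d) : ℕ) ⟨c, (i, j)⟩) *
          star (((Real.sqrt ((dH c : ℝ) * (dM c : ℝ)) : ℂ))⁻¹ *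
            Vv dH dM ord d ((inv k : Fin d) : ℕ) ⟨c, (i', j)⟩)
          = ((((dH c : ℝ) * (dM c : ℝ)) : ℝ) : ℂ)⁻¹ *
            (Vv dH dM ord d ((inv k : Fin d) : ℕ) ⟨c, (i, j)⟩ *
              star (Vv dH dM ord d ((inv k : Fin d) : ℕ) ⟨c, (i', j)⟩)) := by
        intro j
        rw [star_mul', ← hss]
        ring
      rw [Finset.sum_congr rfl fun j _ => hre j, ← Finset.mul_sum,
        block_Vv dH dM ord d (hle c) (hdM c) _ i i']
      have h1 : ((dH c : ℂ)) ≠ 0 := Nat.cast_ne_zero.mpr (hdH c).ne'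
      have h2 : ((dM c : ℂ)) ≠ 0 := Nat.cast_ne_zero.mpr (hdM c).ne'
      split_ifs
      · push_cast
        field_simp
      · rw [mul_zero]
    · -- the representation of Φ
      intro a b
      symm
      set F : β → ℂ := fun k =>
        ((Real.sqrt (if ∃ t : Fin d, em t = k then (d : ℝ)⁻¹ else 0) : ℝ) : ℂ) *
          ((Real.sqrt (((dH a.1 : ℝ) * (dM a.1 : ℝ)) / d) : ℝ) : ℂ) *
          Complex.exp (Complex.I * ((0 : ℝ) : ℂ)) *
          (((Real.sqrt ((dH a.1 : ℝ) * (dM a.1 : ℝ)) : ℂ))⁻¹ *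
            Vv dH dM ord d ((inv k : Fin d) : ℕ) ⟨a.1, a.2⟩) * bas k b with hF
      show ∑ k : β, F k = Φ (a, b)
      have hzero : ∀ k ∈ Finset.univ, k ∉ Finset.image (⇑em) Finset.univ → F k = 0 := by
        intro k _ hk
        have hnex : ¬ ∃ t : Fin d, em t = k := by
          rintro ⟨t, ht⟩
          exact hk (Finset.mem_image.mpr ⟨t, Finset.mem_univ t, ht⟩)
        simp only [hF]
        rw [if_neg hnex, Real.sqrt_zero]
        simp
      have hterm : ∀ t : Fin d, F (em t)
          = (d : ℂ)⁻¹ * (Vv dH dM ord d ((t : Fin d) : ℕ) a * w t b) := by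
        intro t
        have hsc : ((Real.sqrt ((d : ℝ))⁻¹ : ℝ) : ℂ) *
            ((Real.sqrt (((dH a.1 : ℝ) * (dM a.1 : ℝ)) / d) : ℝ) : ℂ) *
            ((Real.sqrt ((dH a.1 : ℝ) * (dM a.1 : ℝ)) : ℂ))⁻¹ = (d : ℂ)⁻¹ := by
          have hn0 : (0:ℝ) < (dH a.1 : ℝ) * (dM a.1 : ℝ) := by
            have h1 := hdH a.1
            have h2 := hdM a.1
            positivity
          have hdpos' : (0:ℝ) < (d : ℝ) := by
            exact_mod_cast hdpos
          have hreal : Real.sqrt ((d : ℝ))⁻¹ * Real.sqrt (((dH a.1 : ℝ) * (dM a.1 : ℝ)) / d) *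
              (Real.sqrt ((dH a.1 : ℝ) * (dM a.1 : ℝ)))⁻¹ = (d : ℝ)⁻¹ := by
            rw [Real.sqrt_inv, Real.sqrt_div hn0.le]
            have hsq : Real.sqrt ((dH a.1 : ℝ) * (dM a.1 : ℝ)) ≠ 0 := by positivity
            calc (Real.sqrt (d:ℝ))⁻¹ *
                (Real.sqrt ((dH a.1 : ℝ) * (dM a.1 : ℝ)) / Real.sqrt (d:ℝ)) *
                (Real.sqrt ((dH a.1 : ℝ) * (dM a.1 : ℝ)))⁻¹
                = (Real.sqrt ((dH a.1 : ℝ) * (dM a.1 : ℝ)) *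
                    (Real.sqrt ((dH a.1 : ℝ) * (dM a.1 : ℝ)))⁻¹) *
                  (Real.sqrt (d:ℝ) * Real.sqrt (d:ℝ))⁻¹ := by
                  rw [mul_inv]
                  ring
              _ = (d:ℝ)⁻¹ := by
                  rw [mul_inv_cancel₀ hsq, Real.mul_self_sqrt hdpos'.le, one_mul]
          calc ((Real.sqrt ((d : ℝ))⁻¹ : ℝ) : ℂ) *
              ((Real.sqrt (((dH a.1 : ℝ) * (dM a.1 : ℝ)) / d) : ℝ) : ℂ) *
              ((Real.sqrt ((dH a.1 : ℝ) * (dM a.1 : ℝ)) : ℂ))⁻¹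
              = ((Real.sqrt ((d : ℝ))⁻¹ * Real.sqrt (((dH a.1 : ℝ) * (dM a.1 : ℝ)) / d) *
                (Real.sqrt ((dH a.1 : ℝ) * (dM a.1 : ℝ)))⁻¹ : ℝ) : ℂ) := by
                push_cast
                ring
            _ = (((d : ℝ)⁻¹ : ℝ) : ℂ) := by rw [hreal]
            _ = (d : ℂ)⁻¹ := by push_cast; ring
        simp only [hF]
        rw [if_pos ⟨t, rfl⟩, hinv t]
        have hbb : bas (em t) b = w t b := hbase t b
        rw [hbb, Complex.ofReal_zero, mul_zero, Complex.exp_zero]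
        calc ((Real.sqrt ((d : ℝ))⁻¹ : ℝ) : ℂ) *
            ((Real.sqrt (((dH a.1 : ℝ) * (dM a.1 : ℝ)) / d) : ℝ) : ℂ) * 1 *
            (((Real.sqrt ((dH a.1 : ℝ) * (dM a.1 : ℝ)) : ℂ))⁻¹ *
              Vv dH dM ord d ((t : Fin d) : ℕ) ⟨a.1, a.2⟩) * w t b
            = (((Real.sqrt ((d : ℝ))⁻¹ : ℝ) : ℂ) *
              ((Real.sqrt (((dH a.1 : ℝ) * (dM a.1 : ℝ)) / d) : ℝ) : ℂ) *
              ((Real.sqrt ((dH a.1 : ℝ) * (dM a.1 : ℝ)) : ℂ))⁻¹) *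
              (Vv dH dM ord d ((t : Fin d) : ℕ) ⟨a.1, a.2⟩ * w t b) := by ring
          _ = (d : ℂ)⁻¹ * (Vv dH dM ord d ((t : Fin d) : ℕ) a * w t b) := by rw [hsc]
      have hwexp : ∀ t : Fin d, Vv dH dM ord d ((t : Fin d) : ℕ) a * w t b
          = ∑ a', (Vv dH dM ord d ((t : Fin d) : ℕ) a *
              star (Vv dH dM ord d ((t : Fin d) : ℕ) a')) * Φ (a', b) := by
        intro t
        simp only [hw]
        rw [Finset.mul_sum]
        refine Finset.sum_congr rfl fun a' _ => by ring
      calc ∑ k : β, F k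
          = ∑ k ∈ Finset.image (⇑em) Finset.univ, F k :=
            (Finset.sum_subset (Finset.subset_univ _) hzero).symm
        _ = ∑ t : Fin d, F (em t) :=
            Finset.sum_image (fun t _ t' _ h => em.injective h)
        _ = ∑ t : Fin d, (d : ℂ)⁻¹ * (Vv dH dM ord d ((t : Fin d) : ℕ) a * w t b) :=
            Finset.sum_congr rfl fun t _ => hterm t
        _ = (d : ℂ)⁻¹ * ∑ t : Fin d, ∑ a', (Vv dH dM ord d ((t : Fin d) : ℕ) a *
              star (Vv dH dM ord d ((t : Fin d) : ℕ) a')) * Φ (a', b) := by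
            rw [← Finset.mul_sum]
            exact congrArg _ (Finset.sum_congr rfl fun t _ => hwexp t)
        _ = (d : ℂ)⁻¹ * ∑ a', (∑ t : Fin d, Vv dH dM ord d ((t : Fin d) : ℕ) a *
              star (Vv dH dM ord d ((t : Fin d) : ℕ) a')) * Φ (a', b) := by
            congr 1
            rw [Finset.sum_comm]
            exact Finset.sum_congr rfl fun a' _ => by rw [Finset.sum_mul]
        _ = (d : ℂ)⁻¹ * ∑ a', (if a = a' then (d : ℂ) else 0) * Φ (a', b) := by
            refine congrArg _ (Finset.sum_congr rfl fun a' _ => ?_)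
            rw [compl_Vv dH dM ord d hdpos hlt hinj a a']
        _ = (d : ℂ)⁻¹ * ((d : ℂ) * Φ (a, b)) := by
            congr 1
            rw [Finset.sum_eq_single a]
            · rw [if_pos rfl]
            · intro a' _ hne
              rw [if_neg (fun h => hne h.symm), zero_mul]
            · intro habs
              exact absurd (Finset.mem_univ a) habs
        _ = Φ (a, b) := by
            rw [← mul_assoc, inv_mul_cancel₀ hdC, one_mul]

end DenseCoding
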